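/- Let M ∈ ℝ^{p×q} and let M_k be any matrix of rank at most k. Then the spectral norm satisfies ‖M − M_k‖₂ ≥ σ_{k+1}(M), where σ_{k+1}(M) is the (k+1)-st singular value of M (Eckart–Young lower bound). -/

import Mathlib

open Matrix
open scoped Matrix.Norms.L2Operator

/-- `singularValue M j` is the `j`-th largest singular value of the real matrix `M`
(0-indexed): the square roots of the eigenvalues of `Mᵀ M` in decreasing order. -/
noncomputable def singularValue {p q : Type*} [Fintype p] [Fintype q] [DecidableEq q]
    (M : Matrix p q ℝ) (j : Fin (Fintype.card q)) : ℝ :=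
  Real.sqrt ((Matrix.isHermitian_conjTranspose_mul_self M : (Mᵀ * M).IsHermitian).eigenvalues₀
    (Tuple.sort (Matrix.isHermitian_conjTranspose_mul_self M : (Mᵀ * M).IsHermitian).eigenvalues₀ j.rev))

private lemma euclid_inner_eq_dot {m : Type*} [Fintype m] (u v : EuclideanSpace ℝ m) :
    (inner ℝ u v : ℝ) = (WithLp.equiv 2 (m → ℝ) u) ⬝ᵥ (WithLp.equiv 2 (m → ℝ) v) := by
  simp [PiLp.inner_apply, dotProduct, RCLike.inner_apply, mul_comm]

/-- Eckart–Young lower bound: for any matrix `M_k` of rank at most `k`, the spectral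
norm error `‖M − M_k‖₂` is at least the `(k+1)`-st singular value of `M`. -/
theorem eckart_young_lower_bound (p q : ℕ) (M Mk : Matrix (Fin p) (Fin q) ℝ)
    (k : ℕ) (hk : k < Fintype.card (Fin q)) (hrank : Mk.rank ≤ k) :
    singularValue M ⟨k, hk⟩ ≤ ‖M - Mk‖ := by
  classical
  have hA : (Mᵀ * M).IsHermitian := (Matrix.isHermitian_conjTranspose_mul_self M : (Mᵀ * M).IsHermitian)
  have hcard : Fintype.card (Fin q) = q := Fintype.card_fin q
  set ev : Fin (Fintype.card (Fin q)) → ℝ := hA.eigenvalues₀ with hev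
  set σe : Equiv.Perm (Fin (Fintype.card (Fin q))) := Tuple.sort ev with hσe
  set e : Fin (Fintype.card (Fin q)) ≃ Fin q := Fintype.equivOfCardEq (Fintype.card_fin _)
    with he
  set b := hA.eigenvectorBasis with hbdef
  set μ := hA.eigenvalues with hμdef
  have hμe : ∀ r, μ (e r) = ev r := by
    intro r
    show hA.eigenvalues₀ (e.symm (e r)) = ev r
    rw [Equiv.symm_apply_apply]
  set j : Fin (Fintype.card (Fin q)) := ⟨k, hk⟩ with hj
  set lam := ev (σe j.rev) with hlam
  have hgoal : singularValue M ⟨k, hk⟩ = Real.sqrt lam := rfl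
  rw [hgoal]
  -- nonnegativity of eigenvalues
  have hPSD : (Mᵀ * M).PosSemidef := by
    have h := Matrix.posSemidef_conjTranspose_mul_self M
    rwa [Matrix.conjTranspose_eq_transpose_of_trivial] at h
  have hμnn : ∀ i, 0 ≤ μ i := fun i => hPSD.eigenvalues_nonneg i
  have hlamnn : 0 ≤ lam := by rw [hlam, ← hμe]; exact hμnn _
  -- index sets
  set T : Finset (Fin (Fintype.card (Fin q))) := Finset.Ici j.rev with hT
  have hjrev : (j.rev : ℕ) = Fintype.card (Fin q) - 1 - k := by
    simp [hj, Fin.val_rev]; omega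
  have hcardT : T.card = k + 1 := by
    rw [hT, Fin.card_Ici]; omega
  set S : Finset (Fin q) := T.image (fun r => e (σe r)) with hS
  have hinj : Function.Injective (fun r => e (σe r)) := e.injective.comp σe.injective
  have hcardS : S.card = k + 1 := by
    rw [hS, Finset.card_image_of_injective _ hinj, hcardT]
  have hSlam : ∀ i ∈ S, lam ≤ μ i := by
    intro i hi
    rw [hS, Finset.mem_image] at hi
    obtain ⟨r, hr, rfl⟩ := hi
    rw [hμe]
    exact Tuple.monotone_sort ev (Finset.mem_Ici.mp hr)
  -- span of top eigenvectors
  set V : Submodule ℝ (EuclideanSpace ℝ (Fin q)) :=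
    Submodule.span ℝ (Set.range fun i : {i // i ∈ S} => b i) with hV
  have hbon : Orthonormal ℝ (fun i : {i // i ∈ S} => b i) :=
    b.orthonormal.comp _ Subtype.val_injective
  have hVrank : Module.finrank ℝ V = k + 1 := by
    rw [hV, finrank_span_eq_card hbon.linearIndependent]
    simpa using hcardS
  -- kernel of Mk
  set W : Submodule ℝ (EuclideanSpace ℝ (Fin q)) :=
    LinearMap.ker (Matrix.toEuclideanLin Mk) with hW
  have hfinq : Module.finrank ℝ (EuclideanSpace ℝ (Fin q)) = q := by
    simp [finrank_euclideanSpace]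
  have hranknull : Module.finrank ℝ (LinearMap.range (Matrix.toEuclideanLin Mk))
      + Module.finrank ℝ W = q := by
    rw [hW, LinearMap.finrank_range_add_finrank_ker, hfinq]
  have hrange : Module.finrank ℝ (LinearMap.range (Matrix.toEuclideanLin Mk)) ≤ k := by
    have h2 : Mk.rank = Module.finrank ℝ (LinearMap.range (Matrix.toEuclideanLin Mk)) := by
      rw [Matrix.toEuclideanLin_eq_toLin]
      exact Matrix.rank_eq_finrank_range_toLin Mk _ _
    omega
  -- intersection is nonzero
  have hne : V ⊓ W ≠ ⊥ := by
    intro hbot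
    have hsum := Submodule.finrank_sup_add_finrank_inf_eq V W
    have hle : Module.finrank ℝ ↥(V ⊔ W) ≤ q := le_trans (Submodule.finrank_le _) (le_of_eq hfinq)
    rw [hbot, finrank_bot] at hsum
    have hkq : k < q := by omega
    omega
  obtain ⟨x, hx, hxne⟩ := Submodule.exists_mem_ne_zero_of_ne_bot hne
  have hxV : x ∈ V := hx.1
  have hxW : Matrix.toEuclideanLin Mk x = 0 := hx.2
  set xf := WithLp.equiv 2 (Fin q → ℝ) x with hxf
  have hMkx : Mk *ᵥ xf = 0 := by
    have h3 := congrArg (WithLp.equiv 2 (Fin p → ℝ)) hxW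
    simpa [hxf] using h3
  -- coefficients
  set c : Fin q → ℝ := fun i => (inner ℝ (b i) x : ℝ) with hc
  have hczero : ∀ i ∉ S, c i = 0 := by
    intro i hi
    refine Submodule.span_induction (p := fun y _ => (inner ℝ (b i) y : ℝ) = 0) ?_ ?_ ?_ ?_ hxV
    · rintro y ⟨r, rfl⟩
      exact b.orthonormal.2 (fun h => hi (h ▸ r.2))
    · exact inner_zero_right _
    · intro y z _ _ hy hz
      rw [inner_add_right, hy, hz, add_zero]
    · intro a y _ hy
      rw [real_inner_smul_right, hy, mul_zero]
  -- Parseval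
  have hParseval : ∀ u v : EuclideanSpace ℝ (Fin q),
      (inner ℝ u v : ℝ) = ∑ i, (inner ℝ (b i) u : ℝ) * (inner ℝ (b i) v : ℝ) := by
    intro u v
    rw [← LinearIsometryEquiv.inner_map_map b.repr u v, euclid_inner_eq_dot]
    simp [dotProduct, OrthonormalBasis.repr_apply_apply]
  have hxnorm : ‖x‖ ^ 2 = ∑ i, c i ^ 2 := by
    rw [← real_inner_self_eq_norm_sq, hParseval x x]
    simp [hc, sq]
  -- spectral computation
  have hsymm : (Mᵀ * M)ᵀ = Mᵀ * M := by
    rw [Matrix.transpose_mul, Matrix.transpose_transpose]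
  have hbidot : ∀ i : Fin q, (WithLp.equiv 2 (Fin q → ℝ) (b i)) ⬝ᵥ xf = c i := by
    intro i
    simp only [hc]
    exact (euclid_inner_eq_dot _ _).symm
  have hAx : ∀ i : Fin q,
      (WithLp.equiv 2 (Fin q → ℝ) (b i)) ⬝ᵥ ((Mᵀ * M) *ᵥ xf) = μ i * c i := by
    intro i
    rw [Matrix.dotProduct_mulVec, ← Matrix.mulVec_transpose, hsymm,
      WithLp.equiv_apply, hA.mulVec_eigenvectorBasis, smul_dotProduct, ← WithLp.equiv_apply,
      hbidot i]
    rfl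
  have hinner : xf ⬝ᵥ ((Mᵀ * M) *ᵥ xf) = ∑ i, μ i * c i ^ 2 := by
    have h4 : xf ⬝ᵥ ((Mᵀ * M) *ᵥ xf)
        = (inner ℝ x ((WithLp.equiv 2 (Fin q → ℝ)).symm ((Mᵀ * M) *ᵥ xf)) : ℝ) := by
      rw [euclid_inner_eq_dot]
      simp [hxf]
    rw [h4, hParseval]
    refine Finset.sum_congr rfl fun i _ => ?_
    have h5 : (inner ℝ (b i) ((WithLp.equiv 2 (Fin q → ℝ)).symm ((Mᵀ * M) *ᵥ xf)) : ℝ)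
        = μ i * c i := by
      rw [euclid_inner_eq_dot, Equiv.apply_symm_apply, hAx i]
    rw [h5]
    have h6 : (inner ℝ (b i) x : ℝ) = c i := rfl
    rw [h6]
    ring
  have hMxdot : xf ⬝ᵥ ((Mᵀ * M) *ᵥ xf) = (M *ᵥ xf) ⬝ᵥ (M *ᵥ xf) := by
    rw [← Matrix.mulVec_mulVec, Matrix.dotProduct_mulVec, Matrix.vecMul_transpose]
  -- lower bound on the quadratic form
  have hlower : lam * ∑ i, c i ^ 2 ≤ ∑ i, μ i * c i ^ 2 := by
    rw [Finset.mul_sum]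
    refine Finset.sum_le_sum fun i _ => ?_
    by_cases hiS : i ∈ S
    · exact mul_le_mul_of_nonneg_right (hSlam i hiS) (sq_nonneg _)
    · simp [hczero i hiS]
  -- put it together
  set y : EuclideanSpace ℝ (Fin p) := (WithLp.equiv 2 (Fin p → ℝ)).symm (M *ᵥ xf) with hy
  have hynorm : ‖y‖ ^ 2 = (M *ᵥ xf) ⬝ᵥ (M *ᵥ xf) := by
    rw [← real_inner_self_eq_norm_sq, euclid_inner_eq_dot, hy, Equiv.apply_symm_apply]
  have hmain : lam * ‖x‖ ^ 2 ≤ ‖y‖ ^ 2 := by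
    rw [hxnorm, hynorm, ← hMxdot, hinner]
    exact hlower
  have h1 : Real.sqrt lam * ‖x‖ ≤ ‖y‖ := by
    have h6 := Real.sqrt_le_sqrt hmain
    rwa [Real.sqrt_mul hlamnn, Real.sqrt_sq (norm_nonneg _), Real.sqrt_sq (norm_nonneg _)]
      at h6
  have h2 : ‖y‖ ≤ ‖M - Mk‖ * ‖x‖ := by
    have h7 := Matrix.l2_opNorm_mulVec (M - Mk) x
    have h8 : (M - Mk) *ᵥ xf = M *ᵥ xf := by
      rw [Matrix.sub_mulVec, hMkx, sub_zero]
    have h9 : ((EuclideanSpace.equiv (Fin p) ℝ).symm ((M - Mk) *ᵥ x) : EuclideanSpace ℝ (Fin p))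
        = y := by
      rw [hy, ← h8]
      rfl
    rwa [h9] at h7
  have hxpos : 0 < ‖x‖ := norm_pos_iff.mpr hxne
  exact le_of_mul_le_mul_right (h1.trans h2) hxpos
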